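/- There is no biholomorphism between the Euclidean unit ball and the bidisc in ℂ²: there exists no bijective map F from B := {(z₁,z₂) ∈ ℂ² : |z₁|² + |z₂|² < 1} onto 𝔻² := {(z₁,z₂) ∈ ℂ² : |z₁| < 1 and |z₂| < 1} such that F is holomorphic (complex differentiable) on B and its inverse is holomorphic on 𝔻². -/

import Mathlib

open Set

noncomputable section

/-- The Euclidean open unit ball in `ℂ²`. -/
def euclBall : Set (ℂ × ℂ) := {z : ℂ × ℂ | ‖z.1‖ ^ 2 + ‖z.2‖ ^ 2 < 1}

/-- The open unit bidisc in `ℂ²`. -/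
def bidisc : Set (ℂ × ℂ) := {z : ℂ × ℂ | ‖z.1‖ < 1 ∧ ‖z.2‖ < 1}

lemma cs2 (v a : ℂ × ℂ) :
    ‖((starRingEnd ℂ) v.1 * a.1 + (starRingEnd ℂ) v.2 * a.2)‖ ≤
      Real.sqrt (‖v.1‖ ^ 2 + ‖v.2‖ ^ 2) *
        Real.sqrt (‖a.1‖ ^ 2 + ‖a.2‖ ^ 2) := by
  have h1 : ‖((starRingEnd ℂ) v.1 * a.1 + (starRingEnd ℂ) v.2 * a.2)‖ ≤
      ‖v.1‖ * ‖a.1‖ + ‖v.2‖ * ‖a.2‖ := by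
    refine (norm_add_le _ _).trans ?_
    simp [norm_mul]
  refine h1.trans ?_
  have hP : (0:ℝ) ≤ ‖v.1‖ ^ 2 + ‖v.2‖ ^ 2 := by positivity
  rw [← Real.sqrt_mul hP]
  apply Real.le_sqrt_of_sq_le
  nlinarith [sq_nonneg (‖v.1‖ * ‖a.2‖ - ‖v.2‖ * ‖a.1‖),
    norm_nonneg v.1, norm_nonneg v.2, norm_nonneg a.1, norm_nonneg a.2]

lemma para2 (u v : ℂ × ℂ) :
    ‖(u.1 + v.1)‖ ^ 2 + ‖(u.2 + v.2)‖ ^ 2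
      + (‖(u.1 - v.1)‖ ^ 2 + ‖(u.2 - v.2)‖ ^ 2)
      = 2 * (‖u.1‖ ^ 2 + ‖u.2‖ ^ 2)
        + 2 * (‖v.1‖ ^ 2 + ‖v.2‖ ^ 2) := by
  simp only [Complex.sq_norm, Complex.normSq_apply, Complex.add_re, Complex.add_im,
    Complex.sub_re, Complex.sub_im]
  ring

noncomputable def mob (c z : ℂ) : ℂ := (z - c) / (1 - (starRingEnd ℂ) c * z)

lemma mob_denom_ne (c z : ℂ) (hc : ‖c‖ < 1) (hz : ‖z‖ < 1) :
    (1 : ℂ) - (starRingEnd ℂ) c * z ≠ 0 := by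
  intro h
  have h1 : (starRingEnd ℂ) c * z = 1 := by linear_combination -h
  have : ‖((starRingEnd ℂ) c * z)‖ = 1 := by simp [h1]
  rw [norm_mul, Complex.norm_conj] at this
  nlinarith [norm_nonneg c, norm_nonneg z]

lemma mob_mem (c z : ℂ) (hc : ‖c‖ < 1) (hz : ‖z‖ < 1) :
    ‖(mob c z)‖ < 1 := by
  have hd := mob_denom_ne c z hc hz
  rw [mob, norm_div, div_lt_one (norm_pos_iff.mpr hd)]
  · have key : Complex.normSq (1 - (starRingEnd ℂ) c * z) - Complex.normSq (z - c)
        = (1 - Complex.normSq c) * (1 - Complex.normSq z) := by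
      simp only [Complex.normSq_apply, Complex.sub_re, Complex.sub_im, Complex.one_re,
        Complex.one_im, Complex.mul_re, Complex.mul_im, Complex.conj_re, Complex.conj_im]
      ring
    have h1 : Complex.normSq c < 1 := by
      have := Complex.sq_norm c; nlinarith [norm_nonneg c]
    have h2 : Complex.normSq z < 1 := by
      have := Complex.sq_norm z; nlinarith [norm_nonneg z]
    have : Complex.normSq (z - c) < Complex.normSq (1 - (starRingEnd ℂ) c * z) := by nlinarith
    have e1 := Complex.sq_norm (z - c)
    have e2 := Complex.sq_norm (1 - (starRingEnd ℂ) c * z)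
    nlinarith [norm_nonneg (z - c), norm_nonneg (1 - (starRingEnd ℂ) c * z)]

lemma mob_diff (c z : ℂ) (hc : ‖c‖ < 1) (hz : ‖z‖ < 1) :
    DifferentiableAt ℂ (mob c) z := by
  apply DifferentiableAt.div
  · exact (differentiableAt_id.sub_const c)
  · exact (differentiableAt_const _).sub ((differentiableAt_const _).mul differentiableAt_id)
  · exact mob_denom_ne c z hc hz

lemma mob_self (c : ℂ) : mob c c = 0 := by simp [mob]

lemma mob_inv (c z : ℂ) (hc : ‖c‖ < 1) (hz : ‖z‖ < 1) :
    mob (-c) (mob c z) = z := by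
  have hd := mob_denom_ne c z hc hz
  have hcc : (1 : ℂ) - (starRingEnd ℂ) c * c ≠ 0 := mob_denom_ne c c hc hc
  rw [mob, mob, map_neg]
  have hd2 : (1 : ℂ) - -(starRingEnd ℂ) c * ((z - c) / (1 - (starRingEnd ℂ) c * z)) =
      (1 - (starRingEnd ℂ) c * c) / (1 - (starRingEnd ℂ) c * z) := by
    field_simp
    ring
  rw [hd2, div_div_eq_mul_div, div_eq_iff hcc]
  rw [sub_neg_eq_add, add_mul, div_mul_cancel₀ _ hd]
  ring

set_option maxHeartbeats 2000000 in
lemma core (F G : ℂ × ℂ → ℂ × ℂ)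
    (hF : Set.MapsTo F euclBall bidisc) (hG : Set.MapsTo G bidisc euclBall)
    (hdF : ∀ z ∈ euclBall, DifferentiableAt ℂ F z)
    (hdG : ∀ w ∈ bidisc, DifferentiableAt ℂ G w)
    (hGF : ∀ z ∈ euclBall, G (F z) = z) (hFG : ∀ w ∈ bidisc, F (G w) = w)
    (hF0 : F 0 = 0) (hG0 : G 0 = 0) : False := by
  have h0B : (0 : ℂ × ℂ) ∈ euclBall := by simp [euclBall]
  have h0D : (0 : ℂ × ℂ) ∈ bidisc := by simp [bidisc]
  set A := fderiv ℂ F 0 with hAdef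
  set B := fderiv ℂ G 0 with hBdef
  have hA : HasFDerivAt F A 0 := (hdF 0 h0B).hasFDerivAt
  have hB : HasFDerivAt G B 0 := (hdG 0 h0D).hasFDerivAt
  have hopenD : IsOpen bidisc := by
    have : bidisc = {z : ℂ × ℂ | ‖z.1‖ < 1} ∩ {z : ℂ × ℂ | ‖z.2‖ < 1} := rfl
    rw [this]
    exact (isOpen_lt (continuous_norm.comp continuous_fst) continuous_const).inter
      (isOpen_lt (continuous_norm.comp continuous_snd) continuous_const)
  -- chain rule : A ∘ B = id
  have hA' : HasFDerivAt F A (G 0) := by rw [hG0]; exact hA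
  have hcomp : HasFDerivAt (F ∘ G) (A.comp B) 0 := hA'.comp 0 hB
  have heq : F ∘ G =ᶠ[nhds (0 : ℂ × ℂ)] id := by
    filter_upwards [hopenD.mem_nhds h0D] with w hw
    exact hFG w hw
  have hid : HasFDerivAt (F ∘ G) (ContinuousLinearMap.id ℂ (ℂ × ℂ)) 0 :=
    (hasFDerivAt_id (0 : ℂ × ℂ)).congr_of_eventuallyEq heq
  have hAB : ∀ w, A (B w) = w := by
    intro w
    have h := hcomp.unique hid
    calc A (B w) = (A.comp B) w := rfl
    _ = (ContinuousLinearMap.id ℂ (ℂ × ℂ)) w := by rw [h]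
    _ = w := rfl
  -- Schwarz for F : coordinates of A v are ≤ 1 in abs, for v ∈ euclBall
  have SF : ∀ v ∈ euclBall, ‖(A v).1‖ ≤ 1 ∧ ‖(A v).2‖ ≤ 1 := by
    intro v hv
    have hNv : ‖v.1‖ ^ 2 + ‖v.2‖ ^ 2 < 1 := hv
    have hmem : ∀ ζ : ℂ, ζ ∈ Metric.ball (0 : ℂ) 1 → ζ • v ∈ euclBall := by
      intro ζ hζ
      rw [Metric.mem_ball, dist_zero_right] at hζ
      show ‖(ζ • v).1‖ ^ 2 + ‖(ζ • v).2‖ ^ 2 < 1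
      have : (ζ • v).1 = ζ * v.1 ∧ (ζ • v).2 = ζ * v.2 := ⟨rfl, rfl⟩
      rw [this.1, this.2, norm_mul, norm_mul]
      have h0 := norm_nonneg ζ
      have h1 := norm_nonneg v.1
      have h2 := norm_nonneg v.2
      have h3 : ‖ζ‖ ^ 2 < 1 := by nlinarith
      have h4 : (0:ℝ) ≤ ‖v.1‖ ^ 2 + ‖v.2‖ ^ 2 := by positivity
      nlinarith [mul_lt_mul' h3.le hNv h4 one_pos]
    have hg : HasDerivAt (fun ζ : ℂ => F (ζ • v)) (A v) 0 := by
      have hl : HasDerivAt (fun ζ : ℂ => ζ • v) ((1 : ℂ) • v) 0 := (hasDerivAt_id 0).smul_const v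
      rw [one_smul] at hl
      have : HasFDerivAt F A ((0 : ℂ) • v) := by rw [zero_smul]; exact hA
      exact this.comp_hasDerivAt 0 hl
    have hgd : ∀ ζ ∈ Metric.ball (0 : ℂ) 1, DifferentiableAt ℂ (fun ζ : ℂ => F (ζ • v)) ζ := by
      intro ζ hζ
      exact (hdF _ (hmem ζ hζ)).comp ζ (differentiableAt_id.smul_const v)
    constructor
    · -- first coordinate
      have hg1 : HasDerivAt (fun ζ : ℂ => (F (ζ • v)).1) ((A v).1) 0 :=
        (ContinuousLinearMap.hasFDerivAt (ContinuousLinearMap.fst ℂ ℂ ℂ)).comp_hasDerivAt 0 hg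
      have hd1 : DifferentiableOn ℂ (fun ζ : ℂ => (F (ζ • v)).1) (Metric.ball (0 : ℂ) 1) :=
        fun ζ hζ => ((hgd ζ hζ).fst).differentiableWithinAt
      have hmaps : Set.MapsTo (fun ζ : ℂ => (F (ζ • v)).1) (Metric.ball (0 : ℂ) 1)
          (Metric.ball ((fun ζ : ℂ => (F (ζ • v)).1) 0) 1) := by
        intro ζ hζ
        have h0' : (fun ζ : ℂ => (F (ζ • v)).1) 0 = 0 := by simp [hF0]
        rw [h0', Metric.mem_ball, dist_zero_right]
        exact (hF (hmem ζ hζ)).1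
      have := Complex.norm_deriv_le_div_of_mapsTo_ball hd1 (hmaps.mono_right Metric.ball_subset_closedBall) one_pos
      rw [hg1.deriv] at this
      simpa using this
    · have hg2 : HasDerivAt (fun ζ : ℂ => (F (ζ • v)).2) ((A v).2) 0 :=
        (ContinuousLinearMap.hasFDerivAt (ContinuousLinearMap.snd ℂ ℂ ℂ)).comp_hasDerivAt 0 hg
      have hd2 : DifferentiableOn ℂ (fun ζ : ℂ => (F (ζ • v)).2) (Metric.ball (0 : ℂ) 1) :=
        fun ζ hζ => ((hgd ζ hζ).snd).differentiableWithinAt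
      have hmaps : Set.MapsTo (fun ζ : ℂ => (F (ζ • v)).2) (Metric.ball (0 : ℂ) 1)
          (Metric.ball ((fun ζ : ℂ => (F (ζ • v)).2) 0) 1) := by
        intro ζ hζ
        have h0' : (fun ζ : ℂ => (F (ζ • v)).2) 0 = 0 := by simp [hF0]
        rw [h0', Metric.mem_ball, dist_zero_right]
        exact (hF (hmem ζ hζ)).2
      have := Complex.norm_deriv_le_div_of_mapsTo_ball hd2 (hmaps.mono_right Metric.ball_subset_closedBall) one_pos
      rw [hg2.deriv] at this
      simpa using this
  -- Schwarz for G : B maps bidisc into closed unit ball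
  have SG : ∀ w ∈ bidisc, ‖(B w).1‖ ^ 2 + ‖(B w).2‖ ^ 2 ≤ 1 := by
    intro w hw
    set N := ‖(B w).1‖ ^ 2 + ‖(B w).2‖ ^ 2 with hNdef
    have hN0 : (0:ℝ) ≤ N := by positivity
    rcases eq_or_lt_of_le hN0 with h | hNpos
    · linarith
    have hmem : ∀ ζ : ℂ, ζ ∈ Metric.ball (0 : ℂ) 1 → ζ • w ∈ bidisc := by
      intro ζ hζ
      rw [Metric.mem_ball, dist_zero_right] at hζ
      have e1 : (ζ • w).1 = ζ * w.1 := rfl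
      have e2 : (ζ • w).2 = ζ * w.2 := rfl
      constructor
      · rw [e1, norm_mul]
        nlinarith [norm_nonneg ζ, norm_nonneg w.1, hw.1]
      · rw [e2, norm_mul]
        nlinarith [norm_nonneg ζ, norm_nonneg w.2, hw.2]
    have hg : HasDerivAt (fun ζ : ℂ => G (ζ • w)) (B w) 0 := by
      have hl : HasDerivAt (fun ζ : ℂ => ζ • w) ((1 : ℂ) • w) 0 := (hasDerivAt_id 0).smul_const w
      rw [one_smul] at hl
      have : HasFDerivAt G B ((0 : ℂ) • w) := by rw [zero_smul]; exact hB
      exact this.comp_hasDerivAt 0 hl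
    have hg1 : HasDerivAt (fun ζ : ℂ => (G (ζ • w)).1) ((B w).1) 0 :=
      (ContinuousLinearMap.hasFDerivAt (ContinuousLinearMap.fst ℂ ℂ ℂ)).comp_hasDerivAt 0 hg
    have hg2 : HasDerivAt (fun ζ : ℂ => (G (ζ • w)).2) ((B w).2) 0 :=
      (ContinuousLinearMap.hasFDerivAt (ContinuousLinearMap.snd ℂ ℂ ℂ)).comp_hasDerivAt 0 hg
    set φ := fun ζ : ℂ => (starRingEnd ℂ) (B w).1 * (G (ζ • w)).1
        + (starRingEnd ℂ) (B w).2 * (G (ζ • w)).2 with hφdef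
    have hφ : HasDerivAt φ ((starRingEnd ℂ) (B w).1 * (B w).1
        + (starRingEnd ℂ) (B w).2 * (B w).2) 0 :=
      (hg1.const_mul ((starRingEnd ℂ) (B w).1)).add (hg2.const_mul ((starRingEnd ℂ) (B w).2))
    have hφd : DifferentiableOn ℂ φ (Metric.ball (0 : ℂ) 1) := by
      intro ζ hζ
      have hgd : DifferentiableAt ℂ (fun ζ : ℂ => G (ζ • w)) ζ :=
        (hdG _ (hmem ζ hζ)).comp ζ (differentiableAt_id.smul_const w)
      exact ((hgd.fst.const_mul _).add (hgd.snd.const_mul _)).differentiableWithinAt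
    have hφ0 : φ 0 = 0 := by simp [hφdef, hG0]
    set s := Real.sqrt N with hsdef
    have hs2 : s ^ 2 = N := Real.sq_sqrt hN0
    have hspos : 0 < s := Real.sqrt_pos.mpr hNpos
    have hmaps : Set.MapsTo φ (Metric.ball (0 : ℂ) 1) (Metric.ball (φ 0) s) := by
      intro ζ hζ
      rw [hφ0, Metric.mem_ball, dist_zero_right]
      have hcs := cs2 (B w) (G (ζ • w))
      have hGin : ‖(G (ζ • w)).1‖ ^ 2 + ‖(G (ζ • w)).2‖ ^ 2 < 1 :=
        hG (hmem ζ hζ)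
      have hlt : Real.sqrt (‖(G (ζ • w)).1‖ ^ 2 + ‖(G (ζ • w)).2‖ ^ 2) < 1 := by
        rw [Real.sqrt_lt' one_pos]
        simpa using hGin
      exact lt_of_le_of_lt hcs (mul_lt_of_lt_one_right hspos hlt)
    have hSch := Complex.norm_deriv_le_div_of_mapsTo_ball hφd (hmaps.mono_right Metric.ball_subset_closedBall) one_pos
    rw [hφ.deriv] at hSch
    have hder : (starRingEnd ℂ) (B w).1 * (B w).1 + (starRingEnd ℂ) (B w).2 * (B w).2
        = ((N : ℝ) : ℂ) := by
      rw [hNdef]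
      rw [mul_comm ((starRingEnd ℂ) (B w).1) _, mul_comm ((starRingEnd ℂ) (B w).2) _,
        Complex.mul_conj, Complex.mul_conj]
      norm_cast
      rw [Complex.sq_norm, Complex.sq_norm]
    rw [hder] at hSch
    rw [Complex.norm_real, Real.norm_eq_abs, _root_.abs_of_nonneg hN0, div_one] at hSch
    nlinarith [hSch, hs2, hspos, sq_nonneg (s - 1)]
  -- final contradiction
  set x₁ := B ((1:ℂ), (1:ℂ)) with hx1def
  set x₂ := B ((1:ℂ), (-1:ℂ)) with hx2def
  set y := B ((1:ℂ), (0:ℂ)) with hydef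
  have hNx : ∀ u : ℂ × ℂ, ‖u.1‖ < 1 → ‖u.2‖ < 1 → True := fun _ _ _ => trivial
  -- bound for x₁ and x₂
  have hbound : ∀ u : ℂ × ℂ, ‖u.1‖ ≤ 1 → ‖u.2‖ ≤ 1 →
      ‖(B u).1‖ ^ 2 + ‖(B u).2‖ ^ 2 ≤ 1 := by
    intro u hu1 hu2
    set Nu := ‖(B u).1‖ ^ 2 + ‖(B u).2‖ ^ 2 with hNu
    have key : ∀ r : ℝ, 0 < r → r < 1 → r ^ 2 * Nu ≤ 1 := by
      intro r h0 h1
      have hwmem : ((r : ℂ) • u) ∈ bidisc := by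
        constructor
        · show ‖((r:ℂ) * u.1)‖ < 1
          rw [norm_mul, Complex.norm_real, Real.norm_eq_abs, _root_.abs_of_pos h0]
          nlinarith [norm_nonneg u.1]
        · show ‖((r:ℂ) * u.2)‖ < 1
          rw [norm_mul, Complex.norm_real, Real.norm_eq_abs, _root_.abs_of_pos h0]
          nlinarith [norm_nonneg u.2]
      have hsg := SG _ hwmem
      rw [map_smul] at hsg
      have e1 : ((r:ℂ) • B u).1 = (r:ℂ) * (B u).1 := rfl
      have e2 : ((r:ℂ) • B u).2 = (r:ℂ) * (B u).2 := rfl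
      rw [e1, e2, norm_mul, norm_mul, Complex.norm_real, Real.norm_eq_abs, _root_.abs_of_pos h0] at hsg
      nlinarith [hsg]
    by_contra hcon
    push_neg at hcon
    have hNupos : 0 < Nu := by linarith
    set sr := Real.sqrt (1 / Nu) with hsr
    have hsr2 : sr ^ 2 = 1 / Nu := Real.sq_sqrt (by positivity)
    have hsrpos : 0 < sr := Real.sqrt_pos.mpr (by positivity)
    have hsrlt : sr < 1 := by
      rw [hsr, Real.sqrt_lt' one_pos]
      rw [div_lt_iff₀ hNupos]
      linarith
    have h0r : 0 < (sr + 1) / 2 := by linarith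
    have h1r : (sr + 1) / 2 < 1 := by linarith
    have hk := key ((sr + 1) / 2) h0r h1r
    have hgt : sr < (sr + 1) / 2 := by linarith
    have hsq : sr ^ 2 < ((sr + 1) / 2) ^ 2 := by nlinarith
    have : sr ^ 2 * Nu = 1 := by rw [hsr2]; field_simp
    nlinarith
  have hNx1 : ‖x₁.1‖ ^ 2 + ‖x₁.2‖ ^ 2 ≤ 1 := by
    apply hbound <;> simp
  have hNx2 : ‖x₂.1‖ ^ 2 + ‖x₂.2‖ ^ 2 ≤ 1 := by
    apply hbound <;> simp
  -- lower bound for y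
  have hAy : A y = ((1:ℂ), (0:ℂ)) := hAB _
  have hNy : 1 ≤ ‖y.1‖ ^ 2 + ‖y.2‖ ^ 2 := by
    by_contra hcon
    push_neg at hcon
    have hy0 : y ≠ 0 := by
      intro h0
      rw [h0, map_zero] at hAy
      have := congrArg Prod.fst hAy
      simp at this
    have hNypos : 0 < ‖y.1‖ ^ 2 + ‖y.2‖ ^ 2 := by
      rcases eq_or_lt_of_le (by positivity : (0:ℝ) ≤ ‖y.1‖ ^ 2 + ‖y.2‖ ^ 2)
        with h | h
      · exfalso
        apply hy0
        have h1 : ‖y.1‖ = 0 := by nlinarith [norm_nonneg y.1, norm_nonneg y.2, sq_nonneg (‖y.1‖), sq_nonneg (‖y.2‖)]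
        have h2 : ‖y.2‖ = 0 := by nlinarith [norm_nonneg y.1, norm_nonneg y.2, sq_nonneg (‖y.1‖), sq_nonneg (‖y.2‖)]
        have : y.1 = 0 := by rwa [norm_eq_zero] at h1 -- map_eq_zero
        have h2' : y.2 = 0 := by rwa [norm_eq_zero] at h2
        exact Prod.ext this h2'
      · exact h
    set s := Real.sqrt (‖y.1‖ ^ 2 + ‖y.2‖ ^ 2) with hsdef
    have hs2 : s ^ 2 = ‖y.1‖ ^ 2 + ‖y.2‖ ^ 2 := Real.sq_sqrt (by positivity)
    have hspos : 0 < s := Real.sqrt_pos.mpr hNypos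
    have hslt : s < 1 := by
      rw [hsdef, Real.sqrt_lt' one_pos]
      simpa using hcon
    have hinv : 1 < 1 / s := by rw [lt_div_iff₀ hspos]; linarith
    set t := (1 + 1 / s) / 2 with htdef
    have ht1 : 1 < t := by rw [htdef]; linarith
    have ht2 : t < 1 / s := by rw [htdef]; linarith
    have hts : t * s < 1 := by
      have := mul_lt_mul_of_pos_right ht2 hspos
      rwa [one_div, inv_mul_cancel₀ hspos.ne'] at this
    have hv : ((t : ℂ) • y) ∈ euclBall := by
      show ‖((t:ℂ) • y).1‖ ^ 2 + ‖((t:ℂ) • y).2‖ ^ 2 < 1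
      have e1 : ((t:ℂ) • y).1 = (t:ℂ) * y.1 := rfl
      have e2 : ((t:ℂ) • y).2 = (t:ℂ) * y.2 := rfl
      rw [e1, e2, norm_mul, norm_mul, Complex.norm_real, Real.norm_eq_abs, _root_.abs_of_pos (by linarith : (0:ℝ) < t)]
      have : t ^ 2 * (‖y.1‖ ^ 2 + ‖y.2‖ ^ 2) = (t * s) ^ 2 := by
        rw [← hs2]; ring
      nlinarith [hts, mul_pos (by linarith : (0:ℝ) < t) hspos]
    have hsf := (SF _ hv).1
    rw [map_smul, hAy] at hsf
    have e1 : ((t:ℂ) • ((1:ℂ), (0:ℂ))).1 = (t:ℂ) * 1 := rfl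
    rw [e1, mul_one, Complex.norm_real, Real.norm_eq_abs, _root_.abs_of_pos (by linarith : (0:ℝ) < t)] at hsf
    linarith
  -- parallelogram
  have hadd : x₁ + x₂ = (2:ℂ) • y := by
    have e : ((1:ℂ),(1:ℂ)) + ((1:ℂ),(-1:ℂ)) = (2:ℂ) • ((1:ℂ),(0:ℂ)) := by
      norm_num [Prod.ext_iff, Prod.smul_fst, Prod.smul_snd, smul_eq_mul]
    rw [hx1def, hx2def, hydef, ← map_add, ← map_smul, e]
  have hNadd : ‖(x₁ + x₂).1‖ ^ 2 + ‖(x₁ + x₂).2‖ ^ 2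
      = 4 * (‖y.1‖ ^ 2 + ‖y.2‖ ^ 2) := by
    rw [hadd]
    have e1 : ((2:ℂ) • y).1 = (2:ℂ) * y.1 := rfl
    have e2 : ((2:ℂ) • y).2 = (2:ℂ) * y.2 := rfl
    rw [e1, e2, norm_mul, norm_mul]
    simp [Complex.norm_two]
    ring
  have hpara := para2 x₁ x₂
  have hdiff0 : ‖(x₁.1 - x₂.1)‖ ^ 2 + ‖(x₁.2 - x₂.2)‖ ^ 2 ≤ 0 := by
    have e1 : (x₁ + x₂).1 = x₁.1 + x₂.1 := rfl
    have e2 : (x₁ + x₂).2 = x₁.2 + x₂.2 := rfl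
    rw [e1, e2] at hNadd
    nlinarith [hpara, hNadd, hNy, hNx1, hNx2]
  have hx12 : x₁ = x₂ := by
    have h1 : ‖(x₁.1 - x₂.1)‖ = 0 := by
      nlinarith [norm_nonneg (x₁.1 - x₂.1), norm_nonneg (x₁.2 - x₂.2),
        sq_nonneg (‖(x₁.1 - x₂.1)‖), sq_nonneg (‖(x₁.2 - x₂.2)‖)]
    have h2 : ‖(x₁.2 - x₂.2)‖ = 0 := by
      nlinarith [norm_nonneg (x₁.1 - x₂.1), norm_nonneg (x₁.2 - x₂.2),
        sq_nonneg (‖(x₁.1 - x₂.1)‖), sq_nonneg (‖(x₁.2 - x₂.2)‖)]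
    rw [norm_eq_zero, sub_eq_zero] at h1 h2
    exact Prod.ext h1 h2
  have : ((1:ℂ), (1:ℂ)) = ((1:ℂ), (-1:ℂ)) := by
    calc ((1:ℂ), (1:ℂ)) = A x₁ := (hAB _).symm
    _ = A x₂ := by rw [hx12]
    _ = ((1:ℂ), (-1:ℂ)) := hAB _
  have := congrArg Prod.snd this
  norm_num at this

theorem no_biholomorphism_ball_bidisc :
    ¬ ∃ F G : ℂ × ℂ → ℂ × ℂ,
      Set.MapsTo F euclBall bidisc ∧ Set.MapsTo G bidisc euclBall ∧
      (∀ z ∈ euclBall, DifferentiableAt ℂ F z) ∧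
      (∀ w ∈ bidisc, DifferentiableAt ℂ G w) ∧
      (∀ z ∈ euclBall, G (F z) = z) ∧
      (∀ w ∈ bidisc, F (G w) = w) := by
  rintro ⟨F, G, hF, hG, hdF, hdG, hGF, hFG⟩
  have h0B : (0 : ℂ × ℂ) ∈ euclBall := by simp [euclBall]
  have hq : F 0 ∈ bidisc := hF h0B
  obtain ⟨hq1, hq2⟩ := hq
  set q1 := (F 0).1 with hq1def
  set q2 := (F 0).2 with hq2def
  have hq1' : ‖(-q1)‖ < 1 := by simpa using hq1
  have hq2' : ‖(-q2)‖ < 1 := by simpa using hq2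
  set F' := fun z : ℂ × ℂ => (mob q1 (F z).1, mob q2 (F z).2) with hF'def
  set G' := fun w : ℂ × ℂ => G (mob (-q1) w.1, mob (-q2) w.2) with hG'def
  have hinner : ∀ w : ℂ × ℂ, w ∈ bidisc → (mob (-q1) w.1, mob (-q2) w.2) ∈ bidisc := by
    intro w hw
    exact ⟨mob_mem (-q1) w.1 hq1' hw.1, mob_mem (-q2) w.2 hq2' hw.2⟩
  have hF' : Set.MapsTo F' euclBall bidisc := by
    intro z hz
    exact ⟨mob_mem q1 (F z).1 hq1 (hF hz).1, mob_mem q2 (F z).2 hq2 (hF hz).2⟩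
  have hG' : Set.MapsTo G' bidisc euclBall := by
    intro w hw
    exact hG (hinner w hw)
  have hdF' : ∀ z ∈ euclBall, DifferentiableAt ℂ F' z := by
    intro z hz
    exact ((mob_diff q1 (F z).1 hq1 (hF hz).1).comp z (hdF z hz).fst).prodMk
      ((mob_diff q2 (F z).2 hq2 (hF hz).2).comp z (hdF z hz).snd)
  have hdG' : ∀ w ∈ bidisc, DifferentiableAt ℂ G' w := by
    intro w hw
    have hin : DifferentiableAt ℂ (fun w : ℂ × ℂ => (mob (-q1) w.1, mob (-q2) w.2)) w :=
      ((mob_diff (-q1) w.1 hq1' hw.1).comp w differentiableAt_fst).prodMk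
        ((mob_diff (-q2) w.2 hq2' hw.2).comp w differentiableAt_snd)
    exact (hdG _ (hinner w hw)).comp w hin
  have hGF' : ∀ z ∈ euclBall, G' (F' z) = z := by
    intro z hz
    show G (mob (-q1) (mob q1 (F z).1), mob (-q2) (mob q2 (F z).2)) = z
    rw [mob_inv q1 (F z).1 hq1 (hF hz).1, mob_inv q2 (F z).2 hq2 (hF hz).2]
    have : ((F z).1, (F z).2) = F z := rfl
    rw [this]
    exact hGF z hz
  have hFG' : ∀ w ∈ bidisc, F' (G' w) = w := by
    intro w hw
    have hw' := hinner w hw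
    show (mob q1 (F (G (mob (-q1) w.1, mob (-q2) w.2))).1,
          mob q2 (F (G (mob (-q1) w.1, mob (-q2) w.2))).2) = w
    rw [hFG _ hw']
    have e1 : mob q1 (mob (-q1) w.1) = w.1 := by
      have := mob_inv (-q1) w.1 hq1' hw.1
      rwa [neg_neg] at this
    have e2 : mob q2 (mob (-q2) w.2) = w.2 := by
      have := mob_inv (-q2) w.2 hq2' hw.2
      rwa [neg_neg] at this
    show (mob q1 (mob (-q1) w.1), mob q2 (mob (-q2) w.2)) = w
    rw [e1, e2]
  have hF'0 : F' 0 = 0 := by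
    show (mob q1 (F 0).1, mob q2 (F 0).2) = 0
    rw [← hq1def, ← hq2def, mob_self, mob_self]
    rfl
  have hG'0 : G' 0 = 0 := by
    show G (mob (-q1) (0 : ℂ × ℂ).1, mob (-q2) (0 : ℂ × ℂ).2) = 0
    have e1 : mob (-q1) (0 : ℂ × ℂ).1 = q1 := by simp [mob]
    have e2 : mob (-q2) (0 : ℂ × ℂ).2 = q2 := by simp [mob]
    rw [e1, e2]
    have : (q1, q2) = F 0 := rfl
    rw [this]
    exact hGF 0 h0B
  exact core F' G' hF' hG' hdF' hdG' hGF' hFG' hF'0 hG'0
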